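/- For F₅(t,u) as above and the indefinite metric g(X,Y) = ½Re trace(I₋ Xᴴ I₋ Y) with I₋ = diag(1,1,-1), the pullback satisfies g(F₅⁻¹∂ₜF₅, F₅⁻¹∂ₜF₅) = -1, g(F₅⁻¹∂ₜF₅, F₅⁻¹∂ᵤF₅) = 0, and the m-component of F₅⁻¹∂ᵤF₅ has squared norm -(sinh(2t)/2)². -/

import Mathlib

open Matrix Complex

noncomputable section

/-- The explicit matrix F₅(t,u). -/
def F5 (t u : ℝ) : Matrix (Fin 3) (Fin 3) ℂ :=
  !![1, 0, 0;
     0, (Real.cosh t : ℂ), Complex.exp (-I * u) * Real.sinh t;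
     0, Complex.exp (I * u) * Real.sinh t, (Real.cosh t : ℂ)]

/-- I₋ = diag(1,1,-1). -/
def Iminus : Matrix (Fin 3) (Fin 3) ℂ := !![1, 0, 0; 0, 1, 0; 0, 0, -1]

/-- The indefinite metric g(X,Y) = ½ Re trace(I₋ Xᴴ I₋ Y). -/
def gSU21 (X Y : Matrix (Fin 3) (Fin 3) ℂ) : ℝ :=
  (1 / 2) * ((Iminus * Xᴴ * Iminus * Y).trace).re

/-- Projection onto m: removal of the diagonal (h-)component. -/
def projm (X : Matrix (Fin 3) (Fin 3) ℂ) : Matrix (Fin 3) (Fin 3) ℂ :=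
  X - Matrix.diagonal fun i => X i i

def dt (F : ℝ → ℝ → Matrix (Fin 3) (Fin 3) ℂ) (t u : ℝ) :
    Matrix (Fin 3) (Fin 3) ℂ :=
  Matrix.of fun i j => deriv (fun s => F s u i j) t

def du (F : ℝ → ℝ → Matrix (Fin 3) (Fin 3) ℂ) (t u : ℝ) :
    Matrix (Fin 3) (Fin 3) ℂ :=
  Matrix.of fun i j => deriv (fun v => F t v i j) u


lemma exp_mul_exp_neg' (u : ℝ) : Complex.exp (-(I * u)) * Complex.exp (I * u) = 1 := by
  rw [← Complex.exp_add]; ring_nf; exact Complex.exp_zero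

lemma F5_inv (t u : ℝ) : (F5 t u)⁻¹ =
    !![1, 0, 0;
       0, (Real.cosh t : ℂ), -(Complex.exp (-I * u) * Real.sinh t);
       0, -(Complex.exp (I * u) * Real.sinh t), (Real.cosh t : ℂ)] := by
  apply Matrix.inv_eq_right_inv
  have h1 := exp_mul_exp_neg' u
  have h2 := Complex.cosh_sq_sub_sinh_sq (t : ℂ)
  rw [F5, Matrix.mul_fin_three]
  ext i j
  fin_cases i <;> fin_cases j <;>
    simp [Matrix.vecHead, Matrix.vecTail]
  all_goals try ring1
  all_goals try linear_combination h2 - Complex.sinh (t:ℂ) ^ 2 * h1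
  all_goals try linear_combination 2*h2 - 2*Complex.sinh (t:ℂ) ^ 2 * h1

lemma dt_F5 (t u : ℝ) : dt F5 t u =
    !![0, 0, 0;
       0, (Real.sinh t : ℂ), Complex.exp (-I * u) * Real.cosh t;
       0, Complex.exp (I * u) * Real.cosh t, (Real.sinh t : ℂ)] := by
  have d1 : deriv (fun s : ℝ => Complex.cosh ↑s) t = Complex.sinh ↑t :=
    ((Complex.hasDerivAt_cosh (t:ℂ)).comp_ofReal).deriv
  have d2 : deriv (fun s : ℝ => Complex.sinh ↑s) t = Complex.cosh ↑t :=
    ((Complex.hasDerivAt_sinh (t:ℂ)).comp_ofReal).deriv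
  ext i j
  fin_cases i <;> fin_cases j <;>
    simp [dt, F5, Matrix.vecHead, Matrix.vecTail, d1, d2] <;> try ring1

lemma du_F5 (t u : ℝ) : du F5 t u =
    !![0, 0, 0;
       0, 0, -I * Complex.exp (-I * u) * Real.sinh t;
       0, I * Complex.exp (I * u) * Real.sinh t, 0] := by
  have kneg : deriv (fun v : ℝ => Complex.exp (-(I * v))) u
      = -(I * Complex.exp (-(I * u))) := by
    have h : HasDerivAt (fun v : ℝ => -(I * (v:ℂ))) (-I) u := by
      simpa [Pi.neg_def] using ((Complex.ofRealCLM.hasDerivAt (x := u)).const_mul I).neg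
    rw [h.cexp.deriv]; ring
  have kpos : deriv (fun v : ℝ => Complex.exp (I * v)) u
      = I * Complex.exp (I * u) := by
    have h : HasDerivAt (fun v : ℝ => I * (v:ℂ)) I u := by
      simpa using (Complex.ofRealCLM.hasDerivAt (x := u)).const_mul I
    rw [h.cexp.deriv]; ring
  ext i j
  fin_cases i <;> fin_cases j <;>
    simp [du, F5, Matrix.vecHead, Matrix.vecTail, kneg, kpos] <;> try ring1

lemma hA_eq (t u : ℝ) : (F5 t u)⁻¹ * dt F5 t u =
    !![(0:ℂ),0,0; 0,0,Complex.exp (-I*u); 0,Complex.exp (I*u),0] := by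
  have h1 := exp_mul_exp_neg' u
  have h2 := Complex.cosh_sq_sub_sinh_sq (t : ℂ)
  rw [F5_inv, dt_F5, Matrix.mul_fin_three]
  ext i j
  fin_cases i <;> fin_cases j <;> simp [Matrix.vecHead, Matrix.vecTail]
  all_goals try ring1
  all_goals try linear_combination (-(Complex.cosh (t:ℂ) * Complex.sinh (t:ℂ))) * h1
  all_goals try linear_combination Complex.exp (-(I*(u:ℂ))) * h2
  all_goals linear_combination Complex.exp (I*(u:ℂ)) * h2

lemma hB_eq (t u : ℝ) : (F5 t u)⁻¹ * du F5 t u =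
    !![(0:ℂ),0,0;
       0, -I * (Real.sinh t:ℂ)^2, -I * Complex.exp (-I*u) * Real.sinh t * Real.cosh t;
       0, I * Complex.exp (I*u) * Real.sinh t * Real.cosh t, I * (Real.sinh t:ℂ)^2] := by
  have h1 := exp_mul_exp_neg' u
  have h2 := Complex.cosh_sq_sub_sinh_sq (t : ℂ)
  rw [F5_inv, du_F5, Matrix.mul_fin_three]
  ext i j
  fin_cases i <;> fin_cases j <;> simp [Matrix.vecHead, Matrix.vecTail]
  all_goals try ring1
  all_goals try linear_combination (-(I * Complex.sinh (t:ℂ) ^ 2)) * h1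
  all_goals try linear_combination (I * Complex.sinh (t:ℂ) ^ 2) * h1
  all_goals try linear_combination (-(I * Complex.cosh (t:ℂ) * Complex.sinh (t:ℂ))) * h1
  all_goals try linear_combination (I * Complex.cosh (t:ℂ) * Complex.sinh (t:ℂ)) * h1
  all_goals try linear_combination (-2*(I * Complex.cosh (t:ℂ) * Complex.sinh (t:ℂ))) * h1
  all_goals try linear_combination (2*(I * Complex.cosh (t:ℂ) * Complex.sinh (t:ℂ))) * h1
  all_goals try linear_combination (-2*(I * Complex.sinh (t:ℂ) ^ 2)) * h1
  all_goals try linear_combination (2*(I * Complex.sinh (t:ℂ) ^ 2)) * h1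

/-- The pullback of the indefinite metric along F₅. -/
theorem F5_induced_metric (t u : ℝ) :
    gSU21 ((F5 t u)⁻¹ * dt F5 t u) ((F5 t u)⁻¹ * dt F5 t u) = -1 ∧
    gSU21 ((F5 t u)⁻¹ * dt F5 t u) ((F5 t u)⁻¹ * du F5 t u) = 0 ∧
    gSU21 (projm ((F5 t u)⁻¹ * du F5 t u)) (projm ((F5 t u)⁻¹ * du F5 t u)) =
      -(Real.sinh (2 * t) / 2) ^ 2 := by
  have h1 := exp_mul_exp_neg' u
  have hPB : projm (!![(0:ℂ),0,0;
       0, -I * (Real.sinh t:ℂ)^2, -I * Complex.exp (-I*u) * Real.sinh t * Real.cosh t;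
       0, I * Complex.exp (I*u) * Real.sinh t * Real.cosh t, I * (Real.sinh t:ℂ)^2])
      = !![(0:ℂ),0,0;
       0, 0, -I * Complex.exp (-I*u) * Real.sinh t * Real.cosh t;
       0, I * Complex.exp (I*u) * Real.sinh t * Real.cosh t, 0] := by
    ext i j
    fin_cases i <;> fin_cases j <;>
      simp [projm, Matrix.diagonal, Matrix.vecHead, Matrix.vecTail]
  rw [hA_eq, hB_eq, hPB]
  have hAH : (!![(0:ℂ),0,0; 0,0,Complex.exp (-I*u); 0,Complex.exp (I*u),0])ᴴ
      = !![(0:ℂ),0,0; 0,0,Complex.exp (-I*u); 0,Complex.exp (I*u),0] := by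
    ext i j
    fin_cases i <;> fin_cases j <;>
      simp [Matrix.conjTranspose_apply, Complex.star_def, ← Complex.exp_conj,
        _root_.map_mul, Complex.conj_I, Complex.conj_ofReal, map_neg,
        Matrix.vecHead, Matrix.vecTail]
  have hPH : (!![(0:ℂ),0,0;
       0, 0, -I * Complex.exp (-I*u) * Real.sinh t * Real.cosh t;
       0, I * Complex.exp (I*u) * Real.sinh t * Real.cosh t, 0])ᴴ
      = !![(0:ℂ),0,0;
       0, 0, -I * Complex.exp (-I*u) * Real.sinh t * Real.cosh t;
       0, I * Complex.exp (I*u) * Real.sinh t * Real.cosh t, 0] := by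
    ext i j
    fin_cases i <;> fin_cases j <;>
      simp [Matrix.conjTranspose_apply, Complex.star_def, ← Complex.exp_conj,
        _root_.map_mul, Complex.conj_I, Complex.conj_ofReal, map_neg,
        ← Complex.sinh_conj, ← Complex.cosh_conj,
        Matrix.vecHead, Matrix.vecTail]
    all_goals try ring1
  refine ⟨?_, ?_, ?_⟩
  · have tr1 : (Iminus *
        (!![(0:ℂ),0,0; 0,0,Complex.exp (-I*u); 0,Complex.exp (I*u),0])ᴴ * Iminus *
        !![(0:ℂ),0,0; 0,0,Complex.exp (-I*u); 0,Complex.exp (I*u),0]).trace = -2 := by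
      rw [hAH, Iminus, Matrix.mul_fin_three, Matrix.mul_fin_three, Matrix.mul_fin_three,
        Matrix.trace_fin_three_of]
      ring_nf
      linear_combination (-2 : ℂ) * h1
    rw [gSU21, tr1]; norm_num
  · have tr2 : (Iminus *
        (!![(0:ℂ),0,0; 0,0,Complex.exp (-I*u); 0,Complex.exp (I*u),0])ᴴ * Iminus *
        !![(0:ℂ),0,0;
           0, -I * (Real.sinh t:ℂ)^2, -I * Complex.exp (-I*u) * Real.sinh t * Real.cosh t;
           0, I * Complex.exp (I*u) * Real.sinh t * Real.cosh t,
           I * (Real.sinh t:ℂ)^2]).trace = 0 := by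
      rw [hAH, Iminus, Matrix.mul_fin_three, Matrix.mul_fin_three, Matrix.mul_fin_three,
        Matrix.trace_fin_three_of]
      ring1
    rw [gSU21, tr2]; norm_num
  · have tr3 : (Iminus *
        (!![(0:ℂ),0,0;
           0, 0, -I * Complex.exp (-I*u) * Real.sinh t * Real.cosh t;
           0, I * Complex.exp (I*u) * Real.sinh t * Real.cosh t, 0])ᴴ * Iminus *
        !![(0:ℂ),0,0;
           0, 0, -I * Complex.exp (-I*u) * Real.sinh t * Real.cosh t;
           0, I * Complex.exp (I*u) * Real.sinh t * Real.cosh t, 0]).trace =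
        ((-2 * (Real.sinh t * Real.cosh t)^2 : ℝ) : ℂ) := by
      rw [hPH, Iminus, Matrix.mul_fin_three, Matrix.mul_fin_three, Matrix.mul_fin_three,
        Matrix.trace_fin_three_of]
      push_cast
      simp only [neg_mul]
      have hI : (I:ℂ)^2 = -1 := Complex.I_sq
      linear_combination (-2 * Complex.sinh (t:ℂ) ^ 2 * Complex.cosh (t:ℂ) ^ 2) * h1 +
        (2 * Complex.exp (I*(u:ℂ)) * Complex.exp (-(I*(u:ℂ))) *
          Complex.sinh (t:ℂ) ^ 2 * Complex.cosh (t:ℂ) ^ 2) * hI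
    rw [gSU21, tr3, Complex.ofReal_re, Real.sinh_two_mul]
    ring

end
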